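/- Let G be a group, a, b ∈ G, and let T, T' be binary trees with n leaves. Set γ₀ = a, γ₁ = b, and for a word w over {0,1} let γ_w be the corresponding product in G. Then γ_{addr_T(i)} = γ_{addr_{T'}(i)} for all i = 1,...,n if and only if (ld_T(i) − ld_{T'}(i), rd_T(i) − rd_{T'}(i)) ∈ Λ_{G,a,b} for all i = 1,...,n, where Λ_{G,a,b} = { (r,s) ∈ ℤ×ℤ : b a^r b^{-1} = a b^{-s} a^{-1} }. -/
import Mathlib


/-- Binary trees: every internal vertex has exactly a left and a right child. -/
inductive BTree : Type where
  | leaf : BTree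
  | node : BTree → BTree → BTree

namespace BTree

/-- Number of leaves. -/
def numLeaves : BTree → ℕ
  | leaf => 1
  | node l r => l.numLeaves + r.numLeaves

/-- Addresses of the leaves in left-to-right order, as words over `{0,1}`;
`false` records a left step (0) and `true` a right step (1). -/
def addrs : BTree → List (List Bool)
  | leaf => [[]]
  | node l r => (l.addrs.map (fun w => false :: w)) ++ (r.addrs.map (fun w => true :: w))

/-- Address of the `i`-th leaf (0-indexed, left to right). -/
def addr (T : BTree) (i : ℕ) : List Bool := T.addrs.getD i []

/-- Left depth of the `i`-th leaf: number of left steps (0's) in its address. -/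
def ld (T : BTree) (i : ℕ) : ℕ := (T.addr i).count false

/-- Right depth of the `i`-th leaf: number of right steps (1's) in its address. -/
def rd (T : BTree) (i : ℕ) : ℕ := (T.addr i).count true

/-- Total depth of the `i`-th leaf. -/
def depth (T : BTree) (i : ℕ) : ℕ := (T.addr i).length

lemma length_addrs (T : BTree) : T.addrs.length = T.numLeaves := by
  induction T with
  | leaf => rfl
  | node l r ihl ihr => simp [addrs, numLeaves, ihl, ihr]

lemma numLeaves_pos (T : BTree) : 0 < T.numLeaves := by
  induction T with
  | leaf => simp [numLeaves]
  | node l r ihl ihr => simp [numLeaves]; omega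

lemma addr_eq_getElem (T : BTree) (i : ℕ) (h : i < T.numLeaves) :
    T.addr i = T.addrs[i]'(by rw [length_addrs]; exact h) := by
  rw [addr, List.getD_eq_getElem _ _ (by rw [length_addrs]; exact h)]

lemma addr_node_left (l r : BTree) (i : ℕ) (h : i < l.numLeaves) :
    (node l r).addr i = false :: l.addr i := by
  rw [addr_eq_getElem _ _ (by simp [numLeaves]; omega),
      addr_eq_getElem _ _ h]
  simp [addrs]
  rw [List.getElem_append_left (by simpa [length_addrs] using h)]
  simp

lemma addr_node_right (l r : BTree) (i : ℕ) (h1 : l.numLeaves ≤ i)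
    (h2 : i < (node l r).numLeaves) :
    (node l r).addr i = true :: r.addr (i - l.numLeaves) := by
  rw [addr_eq_getElem _ _ h2,
      addr_eq_getElem _ _ (show i - l.numLeaves < r.numLeaves by
        simp [numLeaves] at h2; omega)]
  simp [addrs]
  rw [List.getElem_append_right (by simpa [length_addrs] using h1)]
  simp [length_addrs]

lemma addr_zero (T : BTree) : ∃ d, T.addr 0 = List.replicate d false := by
  induction T with
  | leaf => exact ⟨0, rfl⟩
  | node l r ihl ihr =>
    obtain ⟨d, hd⟩ := ihl
    exact ⟨d + 1, by rw [addr_node_left _ _ _ l.numLeaves_pos, hd]; rfl⟩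

lemma addr_last (T : BTree) : ∃ d, T.addr (T.numLeaves - 1) = List.replicate d true := by
  induction T with
  | leaf => exact ⟨0, rfl⟩
  | node l r ihl ihr =>
    obtain ⟨d, hd⟩ := ihr
    refine ⟨d + 1, ?_⟩
    have h1 : l.numLeaves ≤ (node l r).numLeaves - 1 := by
      have := r.numLeaves_pos; simp [numLeaves]; omega
    have h2 : (node l r).numLeaves - 1 < (node l r).numLeaves := by
      have := l.numLeaves_pos; have := r.numLeaves_pos; simp [numLeaves]; omega
    rw [addr_node_right _ _ _ h1 h2,
        show (node l r).numLeaves - 1 - l.numLeaves = r.numLeaves - 1 by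
          have := r.numLeaves_pos; simp [numLeaves]; omega, hd]
    rfl

lemma consec (T : BTree) (i : ℕ) (h : i + 1 < T.numLeaves) :
    ∃ u k m, T.addr i = u ++ false :: List.replicate k true ∧
             T.addr (i + 1) = u ++ true :: List.replicate m false := by
  induction T generalizing i with
  | leaf => simp [numLeaves] at h
  | node l r ihl ihr =>
    have hnode : (node l r).numLeaves = l.numLeaves + r.numLeaves := rfl
    rcases lt_trichotomy (i + 1) l.numLeaves with h1 | h1 | h1
    · obtain ⟨u, k, m, e1, e2⟩ := ihl i h1
      exact ⟨false :: u, k, m, by rw [addr_node_left _ _ _ (by omega), e1]; rfl,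
        by rw [addr_node_left _ _ _ h1, e2]; rfl⟩
    · obtain ⟨k, ek⟩ := addr_last l
      obtain ⟨m, em⟩ := addr_zero r
      refine ⟨[], k, m, ?_, ?_⟩
      · rw [addr_node_left _ _ _ (by omega), show i = l.numLeaves - 1 by
          have := l.numLeaves_pos; omega, ek]; rfl
      · rw [addr_node_right _ _ _ (by omega) h,
          show i + 1 - l.numLeaves = 0 by omega, em]; rfl
    · obtain ⟨u, k, m, e1, e2⟩ := ihr (i - l.numLeaves) (by omega)
      refine ⟨true :: u, k, m, ?_, ?_⟩
      · rw [addr_node_right _ _ _ (by omega) (by omega), e1]; rfl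
      · rw [addr_node_right _ _ _ (by omega) h,
          show i + 1 - l.numLeaves = (i - l.numLeaves) + 1 by omega, e2]; rfl

end BTree

/-- `γ_w` for a word `w` over `{0,1}`: `γ_ε = 1`, `γ_{0w} = a·γ_w`, `γ_{1w} = b·γ_w`. -/
def gammaWord {G : Type*} [Group G] (a b : G) : List Bool → G
  | [] => 1
  | c :: w => (if c then b else a) * gammaWord a b w

section Aux
variable {G : Type*} [Group G] (a b : G)

lemma gammaWord_append (u v : List Bool) :
    gammaWord a b (u ++ v) = gammaWord a b u * gammaWord a b v := by
  induction u with
  | nil => simp [gammaWord]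
  | cons c w ih => simp [gammaWord, ih, mul_assoc]

lemma gammaWord_replicate (k : ℕ) (c : Bool) :
    gammaWord a b (List.replicate k c) = (if c then b else a) ^ k := by
  induction k with
  | zero => simp [gammaWord]
  | succ n ih => rw [List.replicate_succ, gammaWord, ih, pow_succ']

lemma gammaWord_block01 (k : ℕ) :
    gammaWord a b (false :: List.replicate k true) = a * b ^ (k : ℤ) := by
  rw [gammaWord, gammaWord_replicate, zpow_natCast]; simp

lemma gammaWord_block10 (m : ℕ) :
    gammaWord a b (true :: List.replicate m false) = b * a ^ (m : ℤ) := by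
  rw [gammaWord, gammaWord_replicate, zpow_natCast]; simp

/-- The set `Λ_{G,a,b}` as a binary predicate. -/
def Lam (r s : ℤ) : Prop := b * a ^ r * b⁻¹ = a * b ^ (-s) * a⁻¹

variable {a b}

lemma Lam.add {r s r' s' : ℤ} (h : Lam a b r s) (h' : Lam a b r' s') :
    Lam a b (r + r') (s + s') := by
  unfold Lam at *
  calc b * a ^ (r + r') * b⁻¹ = (b * a ^ r * b⁻¹) * (b * a ^ r' * b⁻¹) := by
        rw [zpow_add]; group
    _ = (a * b ^ (-s) * a⁻¹) * (a * b ^ (-s') * a⁻¹) := by rw [h, h']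
    _ = a * b ^ (-(s + s')) * a⁻¹ := by rw [neg_add, zpow_add]; group

lemma Lam.neg {r s : ℤ} (h : Lam a b r s) : Lam a b (-r) (-s) := by
  unfold Lam at *
  calc b * a ^ (-r) * b⁻¹ = (b * a ^ r * b⁻¹)⁻¹ := by group
    _ = (a * b ^ (-s) * a⁻¹)⁻¹ := by rw [h]
    _ = a * b ^ (-(-s)) * a⁻¹ := by group

lemma Lam.congr {r s r' s' : ℤ} (h : Lam a b r s) (hr : r = r') (hs : s = s') :
    Lam a b r' s' := hr ▸ hs ▸ h

lemma step_P_iff (gu gu' : G) (κ κ' μ μ' : ℤ)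
    (Pj : gu * (a * b ^ κ) = gu' * (a * b ^ κ')) :
    (gu * (b * a ^ μ) = gu' * (b * a ^ μ')) ↔ Lam a b (μ' - μ) (κ - κ') := by
  constructor
  · intro Pj1
    have C : a ^ (-μ) * b⁻¹ * a * b ^ κ = a ^ (-μ') * b⁻¹ * a * b ^ κ' := by
      calc a ^ (-μ) * b⁻¹ * a * b ^ κ
          = (gu * (b * a ^ μ))⁻¹ * (gu * (a * b ^ κ)) := by group
        _ = (gu' * (b * a ^ μ'))⁻¹ * (gu' * (a * b ^ κ')) := by rw [Pj, Pj1]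
        _ = a ^ (-μ') * b⁻¹ * a * b ^ κ' := by group
    show b * a ^ (μ' - μ) * b⁻¹ = a * b ^ (-(κ - κ')) * a⁻¹
    calc b * a ^ (μ' - μ) * b⁻¹
        = b * a ^ μ' * (a ^ (-μ) * b⁻¹ * a * b ^ κ) * b ^ (-κ) * a⁻¹ := by group
      _ = b * a ^ μ' * (a ^ (-μ') * b⁻¹ * a * b ^ κ') * b ^ (-κ) * a⁻¹ := by rw [C]
      _ = a * b ^ (-(κ - κ')) * a⁻¹ := by group
  · intro R
    have R' : b * a ^ (μ - μ') * b⁻¹ = a * b ^ (κ - κ') * a⁻¹ := by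
      calc b * a ^ (μ - μ') * b⁻¹ = (b * a ^ (μ' - μ) * b⁻¹)⁻¹ := by group
        _ = (a * b ^ (-(κ - κ')) * a⁻¹)⁻¹ := by rw [R]
        _ = a * b ^ (κ - κ') * a⁻¹ := by group
    calc gu * (b * a ^ μ)
        = gu * (b * a ^ (μ - μ') * b⁻¹) * b * a ^ μ' := by group
      _ = gu * (a * b ^ (κ - κ') * a⁻¹) * b * a ^ μ' := by rw [R']
      _ = (gu * (a * b ^ κ)) * (b ^ (-κ') * a⁻¹ * b * a ^ μ') := by group
      _ = (gu' * (a * b ^ κ')) * (b ^ (-κ') * a⁻¹ * b * a ^ μ') := by rw [Pj]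
      _ = gu' * (b * a ^ μ') := by group

lemma step_Q_iff {κ κ' μ μ' cu cu' tu tu' : ℤ}
    (Qj : Lam a b (cu - cu') (tu - tu' + (κ - κ'))) :
    Lam a b (cu - cu' + (μ - μ')) (tu - tu') ↔ Lam a b (μ' - μ) (κ - κ') := by
  constructor
  · intro Qj1
    exact (Qj.neg.add Qj1).neg.congr (by ring) (by ring)
  · intro R
    exact (Qj.add R.neg).congr (by ring) (by ring)

lemma base_iff (T T' : BTree) :
    (gammaWord a b (T.addr 0) = gammaWord a b (T'.addr 0)) ↔
      Lam a b ((T.ld 0 : ℤ) - (T'.ld 0 : ℤ)) ((T.rd 0 : ℤ) - (T'.rd 0 : ℤ)) := by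
  obtain ⟨d, hd⟩ := T.addr_zero
  obtain ⟨d', hd'⟩ := T'.addr_zero
  unfold BTree.ld BTree.rd Lam
  rw [hd, hd', gammaWord_replicate, gammaWord_replicate]
  norm_num [List.count_replicate]
  rw [zpow_sub, zpow_natCast, zpow_natCast]
  exact ⟨fun h => mul_inv_eq_one.mpr h, fun h => mul_inv_eq_one.mp h⟩

end Aux

/-- `T` and `T'` are `(a,b)`-equivalent modulo `G` iff all the pairs of
differences of left and right depths lie in `Λ_{G,a,b}`. -/
theorem stmt14 (G : Type*) [Group G] (a b : G) (T T' : BTree) (n : ℕ)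
    (hT : T.numLeaves = n) (hT' : T'.numLeaves = n) :
    (∀ i < n, gammaWord a b (T.addr i) = gammaWord a b (T'.addr i)) ↔
      ∀ i < n,
        b * a ^ ((T.ld i : ℤ) - (T'.ld i : ℤ)) * b⁻¹
          = a * b ^ (-((T.rd i : ℤ) - (T'.rd i : ℤ))) * a⁻¹ := by
  subst hT
  constructor
  · intro H i
    induction i with
    | zero => intro _; exact (base_iff T T').mp (H 0 (by omega))
    | succ j ih =>
      intro hj1
      obtain ⟨u, k, m, e1, e2⟩ := T.consec j hj1
      obtain ⟨u', k', m', e1', e2'⟩ := T'.consec j (by omega)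
      have Pj := H j (by omega)
      have Pj1 := H (j + 1) hj1
      rw [e1, e1', gammaWord_append, gammaWord_append,
          gammaWord_block01, gammaWord_block01] at Pj
      rw [e2, e2', gammaWord_append, gammaWord_append,
          gammaWord_block10, gammaWord_block10] at Pj1
      have R := (step_P_iff _ _ _ _ _ _ Pj).mp Pj1
      have Qj : Lam a b ((T.ld j : ℤ) - (T'.ld j : ℤ))
          ((T.rd j : ℤ) - (T'.rd j : ℤ)) := ih (by omega)
      have l0 : T.ld j = u.count false + 1 := by
        simp [BTree.ld, e1, List.count_append, List.count_cons, List.count_replicate]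
      have r0 : T.rd j = u.count true + k := by
        simp [BTree.rd, e1, List.count_append, List.count_cons, List.count_replicate]
      have l0' : T'.ld j = u'.count false + 1 := by
        simp [BTree.ld, e1', List.count_append, List.count_cons, List.count_replicate]
      have r0' : T'.rd j = u'.count true + k' := by
        simp [BTree.rd, e1', List.count_append, List.count_cons, List.count_replicate]
      have l1 : T.ld (j + 1) = u.count false + m := by
        simp [BTree.ld, e2, List.count_append, List.count_cons, List.count_replicate]
      have r1 : T.rd (j + 1) = u.count true + 1 := by
        simp [BTree.rd, e2, List.count_append, List.count_cons, List.count_replicate]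
      have l1' : T'.ld (j + 1) = u'.count false + m' := by
        simp [BTree.ld, e2', List.count_append, List.count_cons, List.count_replicate]
      have r1' : T'.rd (j + 1) = u'.count true + 1 := by
        simp [BTree.rd, e2', List.count_append, List.count_cons, List.count_replicate]
      have Qj' : Lam a b (((u.count false : ℤ)) - (u'.count false : ℤ))
          (((u.count true : ℤ)) - (u'.count true : ℤ) + ((k : ℤ) - (k' : ℤ))) :=
        Qj.congr (by rw [l0, l0']; push_cast; ring) (by rw [r0, r0']; push_cast; ring)
      show Lam a b _ _
      exact ((step_Q_iff Qj').mpr R).congr (by rw [l1, l1']; push_cast; ring)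
        (by rw [r1, r1']; push_cast; ring)
  · intro H i
    induction i with
    | zero => intro _; exact (base_iff T T').mpr (H 0 (by omega))
    | succ j ih =>
      intro hj1
      obtain ⟨u, k, m, e1, e2⟩ := T.consec j hj1
      obtain ⟨u', k', m', e1', e2'⟩ := T'.consec j (by omega)
      have Qj : Lam a b ((T.ld j : ℤ) - (T'.ld j : ℤ))
          ((T.rd j : ℤ) - (T'.rd j : ℤ)) := H j (by omega)
      have Qj1 : Lam a b ((T.ld (j+1) : ℤ) - (T'.ld (j+1) : ℤ))
          ((T.rd (j+1) : ℤ) - (T'.rd (j+1) : ℤ)) := H (j + 1) hj1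
      have Pj := ih (by omega)
      rw [e1, e1', gammaWord_append, gammaWord_append,
          gammaWord_block01, gammaWord_block01] at Pj
      have l0 : T.ld j = u.count false + 1 := by
        simp [BTree.ld, e1, List.count_append, List.count_cons, List.count_replicate]
      have r0 : T.rd j = u.count true + k := by
        simp [BTree.rd, e1, List.count_append, List.count_cons, List.count_replicate]
      have l0' : T'.ld j = u'.count false + 1 := by
        simp [BTree.ld, e1', List.count_append, List.count_cons, List.count_replicate]
      have r0' : T'.rd j = u'.count true + k' := by
        simp [BTree.rd, e1', List.count_append, List.count_cons, List.count_replicate]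
      have l1 : T.ld (j + 1) = u.count false + m := by
        simp [BTree.ld, e2, List.count_append, List.count_cons, List.count_replicate]
      have r1 : T.rd (j + 1) = u.count true + 1 := by
        simp [BTree.rd, e2, List.count_append, List.count_cons, List.count_replicate]
      have l1' : T'.ld (j + 1) = u'.count false + m' := by
        simp [BTree.ld, e2', List.count_append, List.count_cons, List.count_replicate]
      have r1' : T'.rd (j + 1) = u'.count true + 1 := by
        simp [BTree.rd, e2', List.count_append, List.count_cons, List.count_replicate]
      have Qj' : Lam a b (((u.count false : ℤ)) - (u'.count false : ℤ))
          (((u.count true : ℤ)) - (u'.count true : ℤ) + ((k : ℤ) - (k' : ℤ))) :=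
        Qj.congr (by rw [l0, l0']; push_cast; ring) (by rw [r0, r0']; push_cast; ring)
      have Qj1' : Lam a b (((u.count false : ℤ)) - (u'.count false : ℤ) + ((m : ℤ) - (m' : ℤ)))
          (((u.count true : ℤ)) - (u'.count true : ℤ)) :=
        Qj1.congr (by rw [l1, l1']; push_cast; ring) (by rw [r1, r1']; push_cast; ring)
      have R := (step_Q_iff Qj').mp Qj1'
      have Pj1 := (step_P_iff _ _ _ _ _ _ Pj).mpr R
      rw [e2, e2', gammaWord_append, gammaWord_append,
          gammaWord_block10, gammaWord_block10]
      exact Pj1
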